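/- Let τ be a renewal process on the nonnegative integers with inter-arrival distribution K(n) = P(τ_1 = n), and let σ be a renewal sequence. For β ≥ 0 define the constrained partition function Z_N = E_τ[exp(β |τ∩σ∩[1,σ_N]|) 1_{σ_N ∈ τ}] and the free partition function Z_N^free = E_τ[exp(β Σ_{n=1}^N 1_{σ_n ∈ τ})]. Suppose there exist K ≥ 1 and c > 0 such that P(τ_1 = k) ≥ c k^{-(2+α)} for all k ≥ K. Then Z_N ≤ Z_N^free ≤ C (σ_N)^{2+α} Z_N for some constant C > 0 depending only on K, c, β, for all sufficiently large N. -/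

import Mathlib

open MeasureTheory ProbabilityTheory Filter
open scoped Classical ENNReal

/-- The renewal set of a renewal process with inter-arrival (gap) sequence `X`:
the set of all partial sums `X 0 + ... + X (m-1)` (including `0`). -/
def renewalSet {Ω : Type*} (X : ℕ → Ω → ℕ) (ω : Ω) : Set ℕ :=
  {n | ∃ m : ℕ, ∑ i ∈ Finset.range m, X i ω = n}

/-- `X` is an i.i.d. sequence of measurable random variables. -/
def IIDGaps {Ω : Type*} [MeasurableSpace Ω] (X : ℕ → Ω → ℕ) (μ : Measure Ω) : Prop :=
  (∀ i, Measurable (X i)) ∧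
  iIndepFun X μ ∧
  (∀ i, Measure.map (X i) μ = Measure.map (X 0) μ)

/-- **Comparison of free and constrained partition functions.**
Let `τ` be a renewal process with i.i.d. gaps `X` whose gap distribution satisfies
`P(τ₁ = k) ≥ c k^{-(2+α)}` for all `k ≥ K`, and let `σ` be a fixed increasing sequence
of positive integers. For `β ≥ 0`, with
`Z N = E[exp(β #{n ∈ [1,N] : σ_n ∈ τ}) 1_{σ_N ∈ τ}]` and
`Z^free N = E[exp(β #{n ∈ [1,N] : σ_n ∈ τ})]`, there is a constant `C > 0` such that for
all large `N`, `Z N ≤ Z^free N ≤ C (σ_N)^{2+α} Z N`. -/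
theorem stmt1 {Ω : Type*} [MeasurableSpace Ω] (μ : Measure Ω) [IsProbabilityMeasure μ]
    (X : ℕ → Ω → ℕ) (hX : IIDGaps X μ)
    (σ : ℕ → ℕ) (hσmono : StrictMono σ) (hσpos : 0 < σ 1)
    (α : ℝ) (hα : 0 ≤ α)
    (K : ℕ) (hK : 1 ≤ K) (c : ℝ) (hc : 0 < c)
    (hgap : ∀ k : ℕ, K ≤ k → c * (k : ℝ) ^ (-(2 + α)) ≤ (μ {ω | X 0 ω = k}).toReal)
    (β : ℝ) (hβ : 0 ≤ β) :
    ∃ C > (0 : ℝ), ∃ N₀ : ℕ, ∀ N : ℕ, N₀ ≤ N →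
      (∫ ω, Real.exp (β * ∑ n ∈ Finset.Icc 1 N,
          (if σ n ∈ renewalSet X ω then (1 : ℝ) else 0)) *
          (if σ N ∈ renewalSet X ω then (1 : ℝ) else 0) ∂μ)
        ≤ (∫ ω, Real.exp (β * ∑ n ∈ Finset.Icc 1 N,
          (if σ n ∈ renewalSet X ω then (1 : ℝ) else 0)) ∂μ) ∧
      (∫ ω, Real.exp (β * ∑ n ∈ Finset.Icc 1 N,
          (if σ n ∈ renewalSet X ω then (1 : ℝ) else 0)) ∂μ)
        ≤ C * (σ N : ℝ) ^ ((2 : ℝ) + α) *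
          (∫ ω, Real.exp (β * ∑ n ∈ Finset.Icc 1 N,
            (if σ n ∈ renewalSet X ω then (1 : ℝ) else 0)) *
            (if σ N ∈ renewalSet X ω then (1 : ℝ) else 0) ∂μ) := by
  classical
  obtain ⟨hXm, hXi, hXd⟩ := hX
  -- partial sums
  set S : ℕ → Ω → ℕ := fun m ω => ∑ i ∈ Finset.range m, X i ω with hSdef
  have hSmeas : ∀ m, Measurable (S m) := fun m => Finset.measurable_sum _ fun i _ => hXm i
  have hSmono : ∀ (ω : Ω) ⦃a b : ℕ⦄, a ≤ b → S a ω ≤ S b ω := fun ω a b hab =>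
    Finset.sum_le_sum_of_subset (Finset.range_subset_range.2 hab)
  have hmemR : ∀ (p : ℕ) (ω : Ω), p ∈ renewalSet X ω ↔ ∃ m, S m ω = p := fun p ω => Iff.rfl
  have hzero : ∀ ω, (0:ℕ) ∈ renewalSet X ω := fun ω => ⟨0, by simp⟩
  have hRmeas : ∀ p : ℕ, MeasurableSet {ω | p ∈ renewalSet X ω} := by
    intro p
    have h1 : {ω | p ∈ renewalSet X ω} = ⋃ m, S m ⁻¹' {p} := by
      ext ω; simp [renewalSet, hSdef]
    rw [h1]
    exact MeasurableSet.iUnion fun m => hSmeas m (measurableSet_singleton p)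
  -- distribution facts
  have hdist : ∀ (m d : ℕ), μ {ω | X m ω = d} = μ {ω | X 0 ω = d} := by
    intro m d
    have h1 : μ {ω | X m ω = d} = Measure.map (X m) μ {d} := by
      rw [Measure.map_apply (hXm m) (measurableSet_singleton d)]; rfl
    have h2 : μ {ω | X 0 ω = d} = Measure.map (X 0) μ {d} := by
      rw [Measure.map_apply (hXm 0) (measurableSet_singleton d)]; rfl
    rw [h1, h2, hXd m]
  refine ⟨Real.exp (β * K) / c, by positivity, K + 1, fun N hN => ?_⟩
  have hσN : K + 1 ≤ σ N := le_trans hN hσmono.le_apply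
  have hσN0 : 0 < σ N := by omega
  set L : ℕ := σ N - K with hLdef
  have hLlt : L < σ N := by omega
  -- counting function
  set cnt : ℕ → Ω → ℕ := fun t ω =>
    ((Finset.Icc 1 N).filter fun n => σ n ≤ t ∧ σ n ∈ renewalSet X ω).card with hcntdef
  have hcnt_meas : ∀ t, Measurable (cnt t) := by
    intro t
    have h1 : cnt t = fun ω => ∑ n ∈ Finset.Icc 1 N,
        if σ n ≤ t ∧ σ n ∈ renewalSet X ω then 1 else 0 := by
      funext ω; rw [hcntdef]; exact Finset.card_filter _ _
    rw [h1]
    refine Finset.measurable_sum _ fun n _ => Measurable.ite ?_ measurable_const measurable_const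
    exact (MeasurableSet.const _).inter (hRmeas (σ n))
  have hcnt_mono : ∀ (ω : Ω) {a b : ℕ}, a ≤ b → cnt a ω ≤ cnt b ω := by
    intro ω a b hab
    refine Finset.card_le_card (Finset.monotone_filter_right _ ?_)
    intro n hn
    exact fun h => ⟨le_trans h.1 hab, h.2⟩
  have hcnt_le : ∀ t ω, cnt t ω ≤ N := by
    intro t ω
    calc cnt t ω ≤ (Finset.Icc 1 N).card := Finset.card_filter_le _ _
    _ = N := by simp
  set G : ℕ → Ω → ℝ≥0∞ := fun t ω => ENNReal.ofReal (Real.exp (β * cnt t ω)) with hGdef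
  have hG_meas : ∀ t, Measurable (G t) := by
    intro t
    apply ENNReal.measurable_ofReal.comp
    apply Real.measurable_exp.comp
    exact (measurable_from_nat.comp (hcnt_meas t)).const_mul β
  set χ : Ω → ℝ≥0∞ := fun ω => if σ N ∈ renewalSet X ω then 1 else 0 with hχdef
  -- bridge to real integrand
  have hsum_cnt : ∀ ω, (∑ n ∈ Finset.Icc 1 N,
      (if σ n ∈ renewalSet X ω then (1:ℝ) else 0)) = (cnt (σ N) ω : ℝ) := by
    intro ω
    rw [show cnt (σ N) ω =
      ((Finset.Icc 1 N).filter fun n => σ n ≤ σ N ∧ σ n ∈ renewalSet X ω).card from rfl,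
      Finset.card_filter]
    push_cast
    refine Finset.sum_congr rfl fun n hn => ?_
    have hle : σ n ≤ σ N := hσmono.monotone (Finset.mem_Icc.mp hn).2
    by_cases h : σ n ∈ renewalSet X ω <;> simp [h, hle]
  have hf_eq : ∀ ω, ENNReal.ofReal (Real.exp (β * ∑ n ∈ Finset.Icc 1 N,
      (if σ n ∈ renewalSet X ω then (1:ℝ) else 0))) = G (σ N) ω := by
    intro ω; rw [hsum_cnt ω]
  have hfmeas : Measurable (fun ω => Real.exp (β * ∑ n ∈ Finset.Icc 1 N,
      (if σ n ∈ renewalSet X ω then (1:ℝ) else 0))) := by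
    apply Real.measurable_exp.comp
    exact (Finset.measurable_sum _ fun n _ =>
      Measurable.ite (hRmeas (σ n)) measurable_const measurable_const).const_mul β
  set Zfree : ℝ≥0∞ := ∫⁻ ω, G (σ N) ω ∂μ with hZfreedef
  set Zcon : ℝ≥0∞ := ∫⁻ ω, G (σ N) ω * χ ω ∂μ with hZcondef
  have e1 : (∫ ω, Real.exp (β * ∑ n ∈ Finset.Icc 1 N,
      (if σ n ∈ renewalSet X ω then (1:ℝ) else 0)) ∂μ) = Zfree.toReal := by
    rw [integral_eq_lintegral_of_nonneg_ae
      (Filter.Eventually.of_forall fun ω => le_of_lt (Real.exp_pos _))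
      hfmeas.aestronglyMeasurable]
    exact congrArg ENNReal.toReal (lintegral_congr fun ω => hf_eq ω)
  have e2 : (∫ ω, Real.exp (β * ∑ n ∈ Finset.Icc 1 N,
      (if σ n ∈ renewalSet X ω then (1:ℝ) else 0)) *
      (if σ N ∈ renewalSet X ω then (1:ℝ) else 0) ∂μ) = Zcon.toReal := by
    rw [integral_eq_lintegral_of_nonneg_ae (f := fun ω => Real.exp (β * ∑ n ∈ Finset.Icc 1 N,
        (if σ n ∈ renewalSet X ω then (1:ℝ) else 0)) *
        (if σ N ∈ renewalSet X ω then (1:ℝ) else 0))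
      (Filter.Eventually.of_forall (fun ω => by
        by_cases h : σ N ∈ renewalSet X ω <;>
          simp [h, le_of_lt (Real.exp_pos _)]))
      (show Measurable (fun ω => Real.exp (β * ∑ n ∈ Finset.Icc 1 N,
        (if σ n ∈ renewalSet X ω then (1:ℝ) else 0)) *
        (if σ N ∈ renewalSet X ω then (1:ℝ) else 0)) from
      (hfmeas.mul (Measurable.ite (hRmeas (σ N)) measurable_const
        measurable_const))).aestronglyMeasurable]
    refine congrArg ENNReal.toReal (lintegral_congr fun ω => ?_)
    by_cases h : σ N ∈ renewalSet X ω
    · have hχ1 : χ ω = 1 := by simp only [hχdef]; rw [if_pos h]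
      rw [if_pos h, mul_one, hχ1, mul_one]
      exact hf_eq ω
    · have hχ0 : χ ω = 0 := by simp only [hχdef]; rw [if_neg h]
      rw [if_neg h, mul_zero, hχ0, mul_zero, ENNReal.ofReal_zero]
  have hZfree_ne : Zfree ≠ ⊤ := by
    have hle : Zfree ≤ ENNReal.ofReal (Real.exp (β * N)) := by
      refine le_trans (lintegral_mono
        (g := fun _ => ENNReal.ofReal (Real.exp (β * N))) fun ω => ?_) ?_
      · exact ENNReal.ofReal_le_ofReal (Real.exp_le_exp.mpr
          (mul_le_mul_of_nonneg_left (by exact_mod_cast hcnt_le (σ N) ω) hβ))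
      · rw [lintegral_const]; simp
    exact ne_top_of_le_ne_top ENNReal.ofReal_ne_top hle
  have ineq1 : Zcon ≤ Zfree := by
    apply lintegral_mono
    intro ω
    by_cases h : σ N ∈ renewalSet X ω <;> simp [hχdef, h]
  -- Step A : decompose by last renewal in [0, L]
  set Aset : ℕ → Set Ω := fun t => {ω | t ∈ renewalSet X ω} ∩
    ⋂ s, ⋂ (_ : t < s ∧ s ≤ L), {ω | s ∈ renewalSet X ω}ᶜ with hAdef
  have hA_mem : ∀ t ω, ω ∈ Aset t ↔
      (t ∈ renewalSet X ω ∧ ∀ s, t < s → s ≤ L → s ∉ renewalSet X ω) := by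
    intro t ω
    simp only [hAdef, Set.mem_inter_iff, Set.mem_iInter, Set.mem_compl_iff, Set.mem_setOf_eq]
    constructor
    · rintro ⟨h1, h2⟩; exact ⟨h1, fun s hs1 hs2 => h2 s ⟨hs1, hs2⟩⟩
    · rintro ⟨h1, h2⟩; exact ⟨h1, fun s hs => h2 s hs.1 hs.2⟩
  have hAmeas : ∀ t, MeasurableSet (Aset t) := fun t =>
    (hRmeas t).inter (MeasurableSet.iInter fun s => MeasurableSet.iInter fun _ =>
      (hRmeas s).compl)
  have hA_exists : ∀ ω, ∃ t, t ≤ L ∧ ω ∈ Aset t := by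
    intro ω
    have hne : ((Finset.range (L+1)).filter fun t => t ∈ renewalSet X ω).Nonempty :=
      ⟨0, Finset.mem_filter.mpr ⟨Finset.mem_range.mpr (by omega), hzero ω⟩⟩
    obtain ⟨ht0r, ht0m⟩ := Finset.mem_filter.mp (Finset.max'_mem _ hne)
    have ht0L : ((Finset.range (L+1)).filter fun t => t ∈ renewalSet X ω).max' hne ≤ L := by
      have := Finset.mem_range.mp ht0r; omega
    refine ⟨_, ht0L, ?_⟩
    rw [hA_mem]
    refine ⟨ht0m, fun s hs1 hs2 hsm => ?_⟩
    have hsr : s ∈ Finset.range (L+1) := Finset.mem_range.mpr (by omega)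
    have hle := Finset.le_max' ((Finset.range (L+1)).filter fun t => t ∈ renewalSet X ω) s
      (Finset.mem_filter.mpr ⟨hsr, hsm⟩)
    omega
  have hA_disj : ∀ t t', t ≤ L → t' ≤ L → t < t' →
      ∀ ω, ω ∈ Aset t → ω ∈ Aset t' → False := by
    intro t t' _ ht' hlt ω h1 h2
    exact ((hA_mem t ω).mp h1).2 t' hlt ht' ((hA_mem t' ω).mp h2).1
  have hA_decomp : ∀ ω, G (σ N) ω =
      ∑ t ∈ Finset.range (L+1), (Aset t).indicator (G (σ N)) ω := by
    intro ω
    obtain ⟨t0, ht0L, ht0⟩ := hA_exists ω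
    rw [Finset.sum_eq_single_of_mem t0 (Finset.mem_range.mpr (by omega)) ?_]
    · rw [Set.indicator_of_mem ht0]
    · intro t htm htne
      apply Set.indicator_of_notMem
      intro hmem
      have htL : t ≤ L := by have := Finset.mem_range.mp htm; omega
      rcases lt_trichotomy t t0 with h | h | h
      · exact hA_disj t t0 htL ht0L h ω hmem ht0
      · exact htne h
      · exact hA_disj t0 t ht0L htL h ω ht0 hmem
  have hA_bound : ∀ t, t ≤ L → ∀ ω, (Aset t).indicator (G (σ N)) ω ≤
      ENNReal.ofReal (Real.exp (β * K)) *
        ({ω : Ω | t ∈ renewalSet X ω}).indicator (G t) ω := by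
    intro t ht ω
    by_cases hω : ω ∈ Aset t
    · rw [Set.indicator_of_mem hω, Set.indicator_of_mem (show ω ∈ {ω : Ω | t ∈ renewalSet X ω} from ((hA_mem t ω).mp hω).1)]
      have hcnt_bound : cnt (σ N) ω ≤ cnt t ω + K := by
        have hsub : ((Finset.Icc 1 N).filter fun n => σ n ≤ σ N ∧ σ n ∈ renewalSet X ω) ⊆
            ((Finset.Icc 1 N).filter fun n => σ n ≤ t ∧ σ n ∈ renewalSet X ω) ∪
            ((Finset.Icc 1 N).filter fun n => L < σ n ∧ σ n ≤ σ N) := by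
          intro n hn
          obtain ⟨hn1, hn2, hn3⟩ := Finset.mem_filter.mp hn
          rcases le_or_gt (σ n) t with h | h
          · exact Finset.mem_union_left _ (Finset.mem_filter.mpr ⟨hn1, h, hn3⟩)
          · rcases le_or_gt (σ n) L with h2 | h2
            · exact absurd hn3 (((hA_mem t ω).mp hω).2 (σ n) h h2)
            · exact Finset.mem_union_right _ (Finset.mem_filter.mpr ⟨hn1, h2, hn2⟩)
        have hcard2 : ((Finset.Icc 1 N).filter fun n => L < σ n ∧ σ n ≤ σ N).card ≤ K := by
          have h1 : ((Finset.Icc 1 N).filter fun n => L < σ n ∧ σ n ≤ σ N).card ≤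
              (Finset.Ioc L (σ N)).card :=
            Finset.card_le_card_of_injOn σ
              (fun n hn => Finset.mem_Ioc.mpr (Finset.mem_filter.mp hn).2)
              (fun a _ b _ h => hσmono.injective h)
          rw [Nat.card_Ioc] at h1
          omega
        calc cnt (σ N) ω ≤ _ := Finset.card_le_card hsub
          _ ≤ _ := Finset.card_union_le _ _
          _ ≤ cnt t ω + K := Nat.add_le_add_left hcard2 _
      calc G (σ N) ω ≤ ENNReal.ofReal (Real.exp (β * ((cnt t ω : ℝ) + K))) := by
            apply ENNReal.ofReal_le_ofReal
            apply Real.exp_le_exp.mpr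
            refine mul_le_mul_of_nonneg_left ?_ hβ
            exact_mod_cast hcnt_bound
        _ = ENNReal.ofReal (Real.exp (β * K)) * G t ω := by
            rw [hGdef]
            rw [← ENNReal.ofReal_mul (le_of_lt (Real.exp_pos _)), ← Real.exp_add]
            congr 2
            ring
    · rw [Set.indicator_of_notMem hω]; exact zero_le
  set Zt : ℕ → ℝ≥0∞ := fun t =>
    ∫⁻ ω, ({ω : Ω | t ∈ renewalSet X ω}).indicator (G t) ω ∂μ with hZtdef
  have stepA : Zfree ≤ ENNReal.ofReal (Real.exp (β * K)) *
      ∑ t ∈ Finset.range (L+1), Zt t := by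
    have h1 : Zfree = ∑ t ∈ Finset.range (L+1),
        ∫⁻ ω, (Aset t).indicator (G (σ N)) ω ∂μ := by
      rw [hZfreedef, lintegral_congr hA_decomp,
        lintegral_finset_sum _ fun t _ => (hG_meas _).indicator (hAmeas t)]
    rw [h1, Finset.mul_sum]
    refine Finset.sum_le_sum fun t htm => ?_
    have htL : t ≤ L := by have := Finset.mem_range.mp htm; omega
    calc (∫⁻ ω, (Aset t).indicator (G (σ N)) ω ∂μ)
        ≤ ∫⁻ ω, ENNReal.ofReal (Real.exp (β * K)) *
            ({ω : Ω | t ∈ renewalSet X ω}).indicator (G t) ω ∂μ :=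
          lintegral_mono (hA_bound t htL)
      _ = ENNReal.ofReal (Real.exp (β * K)) * Zt t :=
          lintegral_const_mul _ ((hG_meas t).indicator (hRmeas t))
  -- Step B : first hitting decomposition and independence
  set Mset : ℕ → ℕ → Set Ω := fun t m => {ω | S m ω = t ∧ ∀ i < m, S i ω ≠ t} with hMdef
  have hMmeas : ∀ t m, MeasurableSet (Mset t m) := by
    intro t m
    have h1 : Mset t m = (S m ⁻¹' {t}) ∩ ⋂ i, ⋂ (_ : i < m), (S i ⁻¹' {t})ᶜ := by
      ext ω
      simp [hMdef, Set.mem_iInter]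
    rw [h1]
    exact ((hSmeas m) (measurableSet_singleton t)).inter
      (MeasurableSet.iInter fun i => MeasurableSet.iInter fun _ =>
        ((hSmeas i) (measurableSet_singleton t)).compl)
  have hM_mem : ∀ t m ω, ω ∈ Mset t m ↔ (S m ω = t ∧ ∀ i < m, S i ω ≠ t) := by
    intro t m ω; rw [hMdef]; exact Iff.rfl
  have hM_decomp : ∀ t ω, ({ω : Ω | t ∈ renewalSet X ω}).indicator (G t) ω =
      ∑' m, (Mset t m).indicator (G t) ω := by
    intro t ω
    by_cases h : t ∈ renewalSet X ω
    · have hex : ∃ m, S m ω = t := h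
      rw [Set.indicator_of_mem (show ω ∈ {ω : Ω | t ∈ renewalSet X ω} from h), tsum_eq_single (Nat.find hex) ?_]
      · rw [Set.indicator_of_mem ((hM_mem t (Nat.find hex) ω).mpr
          ⟨Nat.find_spec hex, fun i hi => Nat.find_min hex hi⟩)]
      · intro m hm
        apply Set.indicator_of_notMem
        intro hmem
        obtain ⟨h1, h2⟩ := (hM_mem t m ω).mp hmem
        rcases lt_trichotomy m (Nat.find hex) with hlt | heq | hgt
        · exact Nat.find_min hex hlt h1
        · exact hm heq
        · exact h2 _ hgt (Nat.find_spec hex)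
    · rw [Set.indicator_of_notMem (show ω ∉ {ω : Ω | t ∈ renewalSet X ω} from h)]
      symm
      rw [tsum_congr (fun m => Set.indicator_of_notMem
        (fun hmem => h ⟨m, ((hM_mem t m ω).mp hmem).1⟩) _), tsum_zero]
  have hZt_tsum : ∀ t, Zt t = ∑' m, ∫⁻ ω, (Mset t m).indicator (G t) ω ∂μ := by
    intro t
    rw [hZtdef]
    simp only
    rw [lintegral_congr (hM_decomp t)]
    exact lintegral_tsum fun m => ((hG_meas t).indicator (hMmeas t m)).aemeasurable
  -- independence computation
  have hind : ∀ (t m d : ℕ),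
      (∫⁻ ω, (Mset t m).indicator (G t) ω * (if X m ω = d then 1 else 0) ∂μ)
      = (∫⁻ ω, (Mset t m).indicator (G t) ω ∂μ) * μ {ω | X m ω = d} := by
    intro t m d
    set ps : ℕ → (↥(Finset.range m) → ℕ) → ℕ := fun j v =>
      ∑ i ∈ Finset.range j, if h : i ∈ Finset.range m then v ⟨i, h⟩ else 0 with hpsdef
    set cntv : (↥(Finset.range m) → ℕ) → ℕ := fun v =>
      ((Finset.Icc 1 N).filter fun n => σ n ≤ t ∧ ∃ i, i ≤ m ∧ ps i v = σ n).card with hcvdef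
    set Φ : (↥(Finset.range m) → ℕ) → ℝ≥0∞ := fun v =>
      if (ps m v = t ∧ ∀ i < m, ps i v ≠ t) then
        ENNReal.ofReal (Real.exp (β * cntv v)) else 0 with hΦdef
    set Vec : Ω → (↥(Finset.range m) → ℕ) := fun ω i => X i ω with hVdef
    set g2 : ℕ → ℝ≥0∞ := fun x => if x = d then 1 else 0 with hg2def
    have hps : ∀ (j : ℕ) (ω : Ω), j ≤ m → ps j (Vec ω) = S j ω := by
      intro j ω hj
      refine Finset.sum_congr rfl fun i hi => ?_
      have him : i ∈ Finset.range m :=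
        Finset.mem_range.mpr (lt_of_lt_of_le (Finset.mem_range.mp hi) hj)
      rw [dif_pos him]
    have hΦeq : ∀ ω, Φ (Vec ω) = (Mset t m).indicator (G t) ω := by
      intro ω
      by_cases hω : ω ∈ Mset t m
      · obtain ⟨h1, h2⟩ := (hM_mem t m ω).mp hω
        rw [Set.indicator_of_mem hω]
        have hcond : ps m (Vec ω) = t ∧ ∀ i < m, ps i (Vec ω) ≠ t :=
          ⟨by rw [hps m ω le_rfl]; exact h1,
           fun i hi => by rw [hps i ω (le_of_lt hi)]; exact h2 i hi⟩
        rw [hΦdef]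
        simp only [if_pos hcond]
        have hcc : cntv (Vec ω) = cnt t ω := by
          rw [hcvdef, hcntdef]
          simp only
          congr 1
          refine Finset.filter_congr fun n hn => ?_
          constructor
          · rintro ⟨hle, i, hi, hpsi⟩
            exact ⟨hle, (hmemR (σ n) ω).mpr ⟨i, by rw [← hps i ω hi]; exact hpsi⟩⟩
          · rintro ⟨hle, hmem⟩
            obtain ⟨j, hj⟩ := (hmemR (σ n) ω).mp hmem
            refine ⟨hle, ?_⟩
            rcases le_or_gt j m with hjm | hjm
            · exact ⟨j, hjm, by rw [hps j ω hjm]; exact hj⟩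
            · have hSm : S m ω ≤ S j ω := hSmono ω (le_of_lt hjm)
              have heq : σ n = t := by omega
              exact ⟨m, le_rfl, by rw [hps m ω le_rfl, h1, heq]⟩
        rw [hcc]
      · rw [Set.indicator_of_notMem hω, hΦdef]
        simp only
        rw [if_neg]
        intro hcond
        exact hω ((hM_mem t m ω).mpr ⟨by rw [← hps m ω le_rfl]; exact hcond.1,
          fun i hi => by rw [← hps i ω (le_of_lt hi)]; exact hcond.2 i hi⟩)
    have hΦmeas : Measurable Φ := measurable_of_countable Φ
    have hg2meas : Measurable g2 := measurable_from_nat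
    have hVmeas : Measurable Vec := measurable_pi_lambda _ fun i => hXm i
    have hIndep : IndepFun Vec (X m) μ := by
      have hdisj : Disjoint (Finset.range m) ({m} : Finset ℕ) := by
        simp [Finset.disjoint_singleton_right]
      have h := hXi.indepFun_finset (Finset.range m) {m} hdisj hXm
      have h2 := h.comp measurable_id
        (measurable_pi_apply (⟨m, Finset.mem_singleton_self m⟩ : ↥({m} : Finset ℕ)))
      exact h2
    have hIndep2 : IndepFun (fun ω => Φ (Vec ω)) (fun ω => g2 (X m ω)) μ :=
      hIndep.comp hΦmeas hg2meas
    calc (∫⁻ ω, (Mset t m).indicator (G t) ω * (if X m ω = d then 1 else 0) ∂μ)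
        = ∫⁻ ω, ((fun ω => Φ (Vec ω)) * (fun ω => g2 (X m ω))) ω ∂μ := by
          refine lintegral_congr fun ω => ?_
          rw [Pi.mul_apply, hΦeq ω]
      _ = (∫⁻ ω, Φ (Vec ω) ∂μ) * ∫⁻ ω, g2 (X m ω) ∂μ :=
          lintegral_mul_eq_lintegral_mul_lintegral_of_indepFun
            (hΦmeas.comp hVmeas) (hg2meas.comp (hXm m)) hIndep2
      _ = (∫⁻ ω, (Mset t m).indicator (G t) ω ∂μ) * μ {ω | X m ω = d} := by
          congr 1
          · exact lintegral_congr fun ω => hΦeq ω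
          · have hg2eq : ∀ ω, g2 (X m ω) =
                Set.indicator {ω : Ω | X m ω = d} (fun _ => (1:ℝ≥0∞)) ω := by
              intro ω
              by_cases h : X m ω = d <;> simp [hg2def, h]
            rw [lintegral_congr hg2eq, lintegral_indicator (show MeasurableSet {ω : Ω | X m ω = d} from
                hXm m (measurableSet_singleton d)) _,
              setLIntegral_one]
  -- gap probability lower bound
  set q : ℝ≥0∞ := ENNReal.ofReal (c * (σ N : ℝ) ^ (-(2 + α))) with hqdef
  have hrpow_pos : (0:ℝ) < (σ N : ℝ) ^ (-(2+α)) :=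
    Real.rpow_pos_of_pos (by exact_mod_cast hσN0) _
  have hq : ∀ t, t ≤ L → q ≤ μ {ω | X 0 ω = σ N - t} := by
    intro t ht
    have hd : K ≤ σ N - t := by omega
    have hd1 : (0:ℝ) < ((σ N - t : ℕ) : ℝ) := by
      have : 1 ≤ σ N - t := by omega
      exact_mod_cast this
    have h2 : c * (σ N:ℝ) ^ (-(2+α)) ≤ c * ((σ N - t : ℕ):ℝ) ^ (-(2+α)) := by
      refine mul_le_mul_of_nonneg_left ?_ (le_of_lt hc)
      refine Real.rpow_le_rpow_of_nonpos hd1 ?_ (by linarith)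
      exact_mod_cast Nat.sub_le (σ N) t
    calc q ≤ ENNReal.ofReal ((μ {ω | X 0 ω = σ N - t}).toReal) :=
        ENNReal.ofReal_le_ofReal (le_trans h2 (hgap (σ N - t) hd))
      _ = μ {ω | X 0 ω = σ N - t} := ENNReal.ofReal_toReal (measure_ne_top μ _)
  have hB_per : ∀ t, t ≤ L → q * Zt t ≤
      ∑' m, ∫⁻ ω, (Mset t m).indicator (G t) ω *
        (if X m ω = σ N - t then 1 else 0) ∂μ := by
    intro t ht
    rw [hZt_tsum t, ← ENNReal.tsum_mul_left]
    refine ENNReal.tsum_le_tsum fun m => ?_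
    rw [hind t m (σ N - t), mul_comm q _]
    refine mul_le_mul_right ?_ _
    rw [hdist m (σ N - t)]
    exact hq t ht
  -- pointwise bound for step B
  have hB_pt : ∀ ω, (∑ t ∈ Finset.range (L+1), ∑' m,
      (Mset t m).indicator (G t) ω * (if X m ω = σ N - t then 1 else 0))
      ≤ G (σ N) ω * χ ω := by
    intro ω
    by_cases hex : ∃ t m, t ≤ L ∧ ω ∈ Mset t m ∧ X m ω = σ N - t
    · obtain ⟨t0, m0, ht0, hM0, hX0⟩ := hex
      obtain ⟨hM01, hM02⟩ := (hM_mem t0 m0 ω).mp hM0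
      have hSm1 : S (m0+1) ω = σ N := by
        have h1 := hM01
        rw [show S (m0+1) ω = S m0 ω + X m0 ω from Finset.sum_range_succ _ _]
        omega
      have hχ1 : χ ω = 1 := by
        simp only [hχdef]; rw [if_pos (show σ N ∈ renewalSet X ω from ⟨m0+1, hSm1⟩)]
      have hbound : ∀ (t' m' : ℕ), ω ∈ Mset t' m' → X m' ω = σ N - t' → t' ≤ L →
          ∀ (t'' m'' : ℕ), ω ∈ Mset t'' m'' → t'' ≤ L → t'' ≤ t' := by
        intro t' m' hM' hX' ht' t'' m'' hM'' ht''
        obtain ⟨hMa, _⟩ := (hM_mem t' m' ω).mp hM'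
        obtain ⟨hMb, _⟩ := (hM_mem t'' m'' ω).mp hM''
        have hS1 : S (m'+1) ω = σ N := by
          rw [show S (m'+1) ω = S m' ω + X m' ω from Finset.sum_range_succ _ _]
          omega
        rcases le_or_gt m'' m' with h | h
        · have h2 := hSmono ω h
          omega
        · have h2 := hSmono ω (show m' + 1 ≤ m'' from h)
          omega
      have huniq : ∀ t m, t ≤ L → ω ∈ Mset t m → X m ω = σ N - t →
          t = t0 ∧ m = m0 := by
        intro t m ht hM hXe
        have hteq : t = t0 :=
          le_antisymm (hbound t0 m0 hM0 hX0 ht0 t m hM ht)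
            (hbound t m hM hXe ht t0 m0 hM0 ht0)
        subst hteq
        refine ⟨rfl, ?_⟩
        obtain ⟨hMa, hMa2⟩ := (hM_mem t m ω).mp hM
        rcases lt_trichotomy m m0 with h | h | h
        · exact absurd hMa (hM02 m h)
        · exact h
        · exact absurd hM01 (hMa2 m0 h)
      have houter : ∀ t ∈ Finset.range (L+1), t ≠ t0 →
          (∑' m, (Mset t m).indicator (G t) ω * (if X m ω = σ N - t then 1 else 0)) = 0 := by
        intro t htm htne
        have hz : ∀ m, (Mset t m).indicator (G t) ω *
            (if X m ω = σ N - t then 1 else 0) = 0 := by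
          intro m
          by_cases h1 : ω ∈ Mset t m
          · by_cases h2 : X m ω = σ N - t
            · have htL : t ≤ L := by have := Finset.mem_range.mp htm; omega
              exact absurd (huniq t m htL h1 h2).1 htne
            · simp [h2]
          · simp [Set.indicator_of_notMem h1]
        rw [tsum_congr hz, tsum_zero]
      rw [Finset.sum_eq_single_of_mem t0 (Finset.mem_range.mpr (by omega)) houter]
      have hinner : ∀ m, m ≠ m0 → (Mset t0 m).indicator (G t0) ω *
          (if X m ω = σ N - t0 then 1 else 0) = 0 := by
        intro m hm
        by_cases h1 : ω ∈ Mset t0 m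
        · by_cases h2 : X m ω = σ N - t0
          · exact absurd (huniq t0 m ht0 h1 h2).2 hm
          · simp [h2]
        · simp [Set.indicator_of_notMem h1]
      rw [tsum_eq_single m0 hinner, Set.indicator_of_mem hM0, if_pos hX0, mul_one,
        hχ1, mul_one]
      apply ENNReal.ofReal_le_ofReal
      apply Real.exp_le_exp.mpr
      refine mul_le_mul_of_nonneg_left ?_ hβ
      exact_mod_cast hcnt_mono ω (le_trans ht0 (le_of_lt hLlt))
    · have hz : ∀ t ∈ Finset.range (L+1), (∑' m,
          (Mset t m).indicator (G t) ω * (if X m ω = σ N - t then 1 else 0)) = 0 := by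
        intro t htm
        have hz2 : ∀ m, (Mset t m).indicator (G t) ω *
            (if X m ω = σ N - t then 1 else 0) = 0 := by
          intro m
          by_cases h1 : ω ∈ Mset t m
          · by_cases h2 : X m ω = σ N - t
            · have htL : t ≤ L := by have := Finset.mem_range.mp htm; omega
              exact absurd ⟨t, m, htL, h1, h2⟩ hex
            · simp [h2]
          · simp [Set.indicator_of_notMem h1]
        rw [tsum_congr hz2, tsum_zero]
      rw [Finset.sum_eq_zero hz]
      exact zero_le
  have stepB : q * ∑ t ∈ Finset.range (L+1), Zt t ≤ Zcon := by
    rw [Finset.mul_sum]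
    have hmeasB : ∀ t m, Measurable (fun ω => (Mset t m).indicator (G t) ω *
        (if X m ω = σ N - t then 1 else 0)) := by
      intro t m
      refine ((hG_meas t).indicator (hMmeas t m)).mul ?_
      exact Measurable.ite ((hXm m) (measurableSet_singleton (σ N - t)))
        measurable_const measurable_const
    calc (∑ t ∈ Finset.range (L+1), q * Zt t)
        ≤ ∑ t ∈ Finset.range (L+1), ∑' m, ∫⁻ ω, (Mset t m).indicator (G t) ω *
            (if X m ω = σ N - t then 1 else 0) ∂μ := by
          refine Finset.sum_le_sum fun t htm => ?_
          exact hB_per t (by have := Finset.mem_range.mp htm; omega)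
      _ = ∑ t ∈ Finset.range (L+1), ∫⁻ ω, ∑' m, (Mset t m).indicator (G t) ω *
            (if X m ω = σ N - t then 1 else 0) ∂μ := by
          refine Finset.sum_congr rfl fun t _ => ?_
          exact (lintegral_tsum fun m => (hmeasB t m).aemeasurable).symm
      _ = ∫⁻ ω, ∑ t ∈ Finset.range (L+1), ∑' m, (Mset t m).indicator (G t) ω *
            (if X m ω = σ N - t then 1 else 0) ∂μ := by
          exact (lintegral_finset_sum _ fun t _ =>
            Measurable.ennreal_tsum fun m => hmeasB t m).symm
      _ ≤ ∫⁻ ω, G (σ N) ω * χ ω ∂μ := lintegral_mono hB_pt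
      _ = Zcon := by rw [hZcondef]
  -- combine
  have hq0 : q ≠ 0 := by
    rw [hqdef]
    exact (ENNReal.ofReal_pos.mpr (mul_pos hc hrpow_pos)).ne'
  have hqtop : q ≠ ⊤ := ENNReal.ofReal_ne_top
  have hsum_le : (∑ t ∈ Finset.range (L+1), Zt t) ≤ q⁻¹ * Zcon := by
    calc (∑ t ∈ Finset.range (L+1), Zt t)
        = q⁻¹ * (q * ∑ t ∈ Finset.range (L+1), Zt t) := by
          rw [← mul_assoc, ENNReal.inv_mul_cancel hq0 hqtop, one_mul]
      _ ≤ q⁻¹ * Zcon := mul_le_mul_right stepB _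
  have hCσpos : (0:ℝ) < (σ N : ℝ) ^ ((2:ℝ) + α) :=
    Real.rpow_pos_of_pos (by exact_mod_cast hσN0) _
  have final_lint : Zfree ≤
      ENNReal.ofReal (Real.exp (β * K) / c * (σ N : ℝ) ^ ((2:ℝ) + α)) * Zcon := by
    refine le_trans stepA ?_
    calc ENNReal.ofReal (Real.exp (β * K)) * ∑ t ∈ Finset.range (L+1), Zt t
        ≤ ENNReal.ofReal (Real.exp (β * K)) * (q⁻¹ * Zcon) := mul_le_mul_right hsum_le _
      _ = (ENNReal.ofReal (Real.exp (β * K)) * q⁻¹) * Zcon := by rw [mul_assoc]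
      _ = ENNReal.ofReal (Real.exp (β * K) / c * (σ N : ℝ) ^ ((2:ℝ) + α)) * Zcon := by
          congr 1
          rw [hqdef, ← ENNReal.ofReal_inv_of_pos (mul_pos hc hrpow_pos),
            ← ENNReal.ofReal_mul (le_of_lt (Real.exp_pos _))]
          congr 1
          have hneg : ((σ N:ℝ)) ^ (-(2+α)) = ((σ N:ℝ) ^ ((2:ℝ)+α))⁻¹ := by
            rw [← Real.rpow_neg (by positivity)]
          rw [mul_inv, hneg, inv_inv]
          ring
  rw [e1, e2]
  constructor
  · exact ENNReal.toReal_mono hZfree_ne ineq1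
  · have hrhs_ne : ENNReal.ofReal (Real.exp (β * K) / c * (σ N : ℝ) ^ ((2:ℝ) + α)) *
        Zcon ≠ ⊤ :=
      ENNReal.mul_ne_top ENNReal.ofReal_ne_top (ne_top_of_le_ne_top hZfree_ne ineq1)
    calc Zfree.toReal ≤ (ENNReal.ofReal (Real.exp (β * K) / c *
          (σ N : ℝ) ^ ((2:ℝ) + α)) * Zcon).toReal :=
        ENNReal.toReal_mono hrhs_ne final_lint
      _ = Real.exp (β * K) / c * (σ N : ℝ) ^ ((2:ℝ) + α) * Zcon.toReal := by
          rw [ENNReal.toReal_mul, ENNReal.toReal_ofReal (by positivity)]
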